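/- Consider a finite-horizon non-stationary MDP with finite state space S, finite action space A, horizon H, episode-indexed mean rewards r_h^k : S × A → [0,1] and transition kernels P_h^k(·|s,a) for episodes k = 1,…,K and steps h = 1,…,H. Define the optimal Q-values by backward recursion Q_H^{k,*}(s,a) = r_H^k(s,a), Q_h^{k,*}(s,a) = r_h^k(s,a) + Σ_{s'} P_h^k(s'|s,a) max_{a'} Q_{h+1}^{k,*}(s',a'). For each step h let Δ_{r,h} = Σ_{k=1}^{K-1} sup_{s,a} |r_h^k(s,a) − r_h^{k+1}(s,a)| and Δ_{p,h} = Σ_{k=1}^{K-1} sup_{s,a} ‖P_h^k(·|s,a) − P_h^{k+1}(·|s,a)‖_1. Then for every triple (s,a,h) and every 1 ≤ k₁ < k₂ ≤ K, |Q_h^{k₁,*}(s,a) − Q_h^{k₂,*}(s,a)| ≤ Σ_{h'=h}^{H} Δ_{r,h'} + H · Σ_{h'=h}^{H} Δ_{p,h'}. -/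
import Mathlib

private lemma le_ciSup2 {S A : Type*} [Finite S] [Finite A] (f : S → A → ℝ) (s : S) (a : A) :
    f s a ≤ ⨆ s, ⨆ a, f s a :=
  le_trans (le_ciSup (f := fun a => f s a) (Set.Finite.bddAbove (Set.finite_range _)) a)
    (le_ciSup (f := fun s => ⨆ a, f s a) (Set.Finite.bddAbove (Set.finite_range _)) s)

private lemma ciSup_sub_ciSup_le' {A : Type*} [Finite A] [Nonempty A] (f g : A → ℝ) :
    (⨆ a, f a) - ⨆ a, g a ≤ ⨆ a, |f a - g a| := by
  rw [sub_le_iff_le_add]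
  refine ciSup_le fun a => ?_
  have h1 : f a ≤ |f a - g a| + g a := by
    have := le_abs_self (f a - g a); linarith
  refine h1.trans (add_le_add ?_ ?_)
  · exact le_ciSup (f := fun a => |f a - g a|) (Set.Finite.bddAbove (Set.finite_range _)) a
  · exact le_ciSup (f := g) (Set.Finite.bddAbove (Set.finite_range _)) a

private lemma abs_ciSup_sub_ciSup_le' {A : Type*} [Finite A] [Nonempty A] (f g : A → ℝ) :
    |(⨆ a, f a) - ⨆ a, g a| ≤ ⨆ a, |f a - g a| := by
  rw [abs_sub_le_iff]
  refine ⟨ciSup_sub_ciSup_le' f g, ?_⟩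
  have := ciSup_sub_ciSup_le' g f
  simpa [abs_sub_comm] using this

private lemma abs_telescope (f : ℕ → ℝ) : ∀ k₁ k₂, k₁ ≤ k₂ →
    |f k₁ - f k₂| ≤ ∑ k ∈ Finset.Ico k₁ k₂, |f k - f (k + 1)| := by
  intro k₁ k₂ h
  induction k₂, h using Nat.le_induction with
  | base => simp
  | succ n hn ih =>
    rw [Finset.sum_Ico_succ_top hn]
    calc |f k₁ - f (n + 1)| ≤ |f k₁ - f n| + |f n - f (n + 1)| := abs_sub_le _ _ _
      _ ≤ _ := add_le_add ih le_rfl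

/-- Drift of optimal Q-values in a non-stationary finite-horizon MDP: for any
state-action pair and step `h`, optimal Q-values of two episodes differ by at
most the cumulative reward variation plus `H` times the cumulative transition
variation over steps `h, …, H`. -/
theorem optimalQ_drift
    {S A : Type*} [Fintype S] [Fintype A] [Nonempty S] [Nonempty A]
    (K H : ℕ) (hK : 1 ≤ K) (hH : 1 ≤ H)
    (r : ℕ → ℕ → S → A → ℝ) (P : ℕ → ℕ → S → A → S → ℝ)
    (hr0 : ∀ k h s a, 0 ≤ r k h s a) (hr1 : ∀ k h s a, r k h s a ≤ 1)
    (hP0 : ∀ k h s a s', 0 ≤ P k h s a s')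
    (hP1 : ∀ k h s a, ∑ s', P k h s a s' = 1)
    (Q : ℕ → ℕ → S → A → ℝ)
    (hQH : ∀ k s a, Q k H s a = r k H s a)
    (hQrec : ∀ k h, 1 ≤ h → h < H → ∀ s a,
        Q k h s a = r k h s a + ∑ s', P k h s a s' * (⨆ a', Q k (h + 1) s' a'))
    (Δr Δp : ℕ → ℝ)
    (hΔr : ∀ h, Δr h = ∑ k ∈ Finset.Ico 1 K, ⨆ s, ⨆ a, |r k h s a - r (k + 1) h s a|)
    (hΔp : ∀ h, Δp h = ∑ k ∈ Finset.Ico 1 K,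
        ⨆ s, ⨆ a, ∑ s', |P k h s a s' - P (k + 1) h s a s'|) :
    ∀ (s : S) (a : A) (h k₁ k₂ : ℕ), 1 ≤ h → h ≤ H → 1 ≤ k₁ → k₁ < k₂ → k₂ ≤ K →
      |Q k₁ h s a - Q k₂ h s a| ≤
        (∑ h' ∈ Finset.Icc h H, Δr h') + (H : ℝ) * ∑ h' ∈ Finset.Icc h H, Δp h' := by
  classical
  set δr : ℕ → ℕ → ℝ := fun h k => ⨆ s, ⨆ a, |r k h s a - r (k + 1) h s a| with hδr
  set δp : ℕ → ℕ → ℝ := fun h k => ⨆ s, ⨆ a, ∑ s', |P k h s a s' - P (k + 1) h s a s'|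
    with hδp
  obtain ⟨s₀⟩ := (inferInstance : Nonempty S)
  obtain ⟨a₀⟩ := (inferInstance : Nonempty A)
  have hδr0 : ∀ h k, 0 ≤ δr h k := fun h k =>
    le_trans (abs_nonneg _) (le_ciSup2 (fun s a => |r k h s a - r (k + 1) h s a|) s₀ a₀)
  have hδp0 : ∀ h k, 0 ≤ δp h k := fun h k =>
    le_trans (Finset.sum_nonneg fun _ _ => abs_nonneg _)
      (le_ciSup2 (fun s a => ∑ s', |P k h s a s' - P (k + 1) h s a s'|) s₀ a₀)
  -- Bounds on Q
  have hQbdd : ∀ n k h, h + n = H → 1 ≤ h → ∀ s a,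
      0 ≤ Q k h s a ∧ Q k h s a ≤ (n : ℝ) + 1 := by
    intro n
    induction n with
    | zero =>
      intro k h hhn _ s a
      have hhe : h = H := by omega
      rw [hhe, hQH]
      exact ⟨hr0 k H s a, by simpa using hr1 k H s a⟩
    | succ n ih =>
      intro k h hhn hh1 s a
      have hhH : h < H := by omega
      have hrec := hQrec k h hh1 hhH s a
      have hV : ∀ s', 0 ≤ (⨆ a', Q k (h + 1) s' a') ∧
          (⨆ a', Q k (h + 1) s' a') ≤ (n : ℝ) + 1 := by
        intro s'
        have hb := fun a' => ih k (h + 1) (by omega) (by omega) s' a'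
        constructor
        · exact le_trans (hb a₀).1 (le_ciSup (Set.Finite.bddAbove (Set.finite_range _)) a₀)
        · exact ciSup_le fun a' => (hb a').2
      constructor
      · rw [hrec]
        have : 0 ≤ ∑ s', P k h s a s' * (⨆ a', Q k (h + 1) s' a') :=
          Finset.sum_nonneg fun s' _ => mul_nonneg (hP0 k h s a s') (hV s').1
        linarith [hr0 k h s a]
      · rw [hrec]
        have hsum : ∑ s', P k h s a s' * (⨆ a', Q k (h + 1) s' a') ≤ (n : ℝ) + 1 := by
          calc ∑ s', P k h s a s' * (⨆ a', Q k (h + 1) s' a')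
              ≤ ∑ s', P k h s a s' * ((n : ℝ) + 1) :=
                Finset.sum_le_sum fun s' _ =>
                  mul_le_mul_of_nonneg_left (hV s').2 (hP0 k h s a s')
            _ = (n : ℝ) + 1 := by rw [← Finset.sum_mul, hP1, one_mul]
        have := hr1 k h s a
        push_cast
        linarith
  -- Consecutive-episode drift bound
  have key : ∀ n k h, h + n = H → 1 ≤ h → ∀ s a,
      |Q k h s a - Q (k + 1) h s a| ≤
        (∑ h' ∈ Finset.Icc h H, δr h' k) + (H : ℝ) * ∑ h' ∈ Finset.Icc h H, δp h' k := by
    intro n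
    induction n with
    | zero =>
      intro k h hhn _ s a
      have hhe : h = H := by omega
      rw [hhe, hQH, hQH]
      have h1 : |r k H s a - r (k + 1) H s a| ≤ δr H k :=
        le_ciSup2 (fun s a => |r k H s a - r (k + 1) H s a|) s a
      have h2 : (0 : ℝ) ≤ (H : ℝ) * δp H k := mul_nonneg (Nat.cast_nonneg _) (hδp0 H k)
      simp only [Finset.Icc_self, Finset.sum_singleton]
      linarith
    | succ n ih =>
      intro k h hhn hh1 s a
      have hhH : h < H := by omega
      have hins : Finset.Icc h H = insert h (Finset.Icc (h + 1) H) := by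
        ext x; simp; omega
      have hnotmem : h ∉ Finset.Icc (h + 1) H := by simp
      set V : ℕ → S → ℝ := fun j s' => ⨆ a', Q j (h + 1) s' a' with hV
      set D : ℝ := (∑ h' ∈ Finset.Icc (h + 1) H, δr h' k) +
        (H : ℝ) * ∑ h' ∈ Finset.Icc (h + 1) H, δp h' k with hD
      have hD0 : 0 ≤ D :=
        add_nonneg (Finset.sum_nonneg fun h' _ => hδr0 h' k)
          (mul_nonneg (Nat.cast_nonneg _) (Finset.sum_nonneg fun h' _ => hδp0 h' k))
      have hVd : ∀ s', |V k s' - V (k + 1) s'| ≤ D := by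
        intro s'
        refine le_trans (abs_ciSup_sub_ciSup_le' _ _) (ciSup_le fun a' => ?_)
        exact ih k (h + 1) (by omega) (by omega) s' a'
      have hVb : ∀ j s', 0 ≤ V j s' ∧ V j s' ≤ (H : ℝ) := by
        intro j s'
        obtain ⟨hb0, hb1⟩ := hQbdd n j (h + 1) (by omega) (by omega) s' a₀
        constructor
        · exact le_trans (hQbdd n j (h + 1) (by omega) (by omega) s' a₀).1
            (le_ciSup (Set.Finite.bddAbove (Set.finite_range _)) a₀)
        · refine ciSup_le fun a' => ?_
          have := (hQbdd n j (h + 1) (by omega) (by omega) s' a').2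
          have hn : (n : ℝ) + 1 ≤ (H : ℝ) := by
            have : n + 1 ≤ H := by omega
            exact_mod_cast this
          linarith
      have hterm : ∀ s', |P k h s a s' * V k s' - P (k + 1) h s a s' * V (k + 1) s'| ≤
          |P k h s a s' - P (k + 1) h s a s'| * (H : ℝ) + P (k + 1) h s a s' * D := by
        intro s'
        have e : P k h s a s' * V k s' - P (k + 1) h s a s' * V (k + 1) s' =
            (P k h s a s' - P (k + 1) h s a s') * V k s' +
              P (k + 1) h s a s' * (V k s' - V (k + 1) s') := by ring
        rw [e]
        refine le_trans (abs_add_le _ _) (add_le_add ?_ ?_)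
        · rw [abs_mul]
          refine mul_le_mul_of_nonneg_left ?_ (abs_nonneg _)
          rw [abs_of_nonneg (hVb k s').1]
          exact (hVb k s').2
        · rw [abs_mul, abs_of_nonneg (hP0 _ _ _ _ _)]
          exact mul_le_mul_of_nonneg_left (hVd s') (hP0 _ _ _ _ _)
      have hPsum : ∑ s', |P k h s a s' - P (k + 1) h s a s'| ≤ δp h k :=
        le_ciSup2 (fun s a => ∑ s', |P k h s a s' - P (k + 1) h s a s'|) s a
      have hrd : |r k h s a - r (k + 1) h s a| ≤ δr h k :=
        le_ciSup2 (fun s a => |r k h s a - r (k + 1) h s a|) s a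
      rw [hQrec k h hh1 hhH, hQrec (k + 1) h hh1 hhH]
      have e2 : r k h s a + (∑ s', P k h s a s' * V k s') -
          (r (k + 1) h s a + ∑ s', P (k + 1) h s a s' * V (k + 1) s') =
          (r k h s a - r (k + 1) h s a) +
            ∑ s', (P k h s a s' * V k s' - P (k + 1) h s a s' * V (k + 1) s') := by
        rw [Finset.sum_sub_distrib]; ring
      rw [e2]
      have hsum2 : |∑ s', (P k h s a s' * V k s' - P (k + 1) h s a s' * V (k + 1) s')| ≤
          (H : ℝ) * δp h k + D := by
        refine le_trans (Finset.abs_sum_le_sum_abs _ _) ?_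
        refine le_trans (Finset.sum_le_sum fun s' _ => hterm s') ?_
        rw [Finset.sum_add_distrib, ← Finset.sum_mul, ← Finset.sum_mul, hP1, one_mul]
        have : (∑ s', |P k h s a s' - P (k + 1) h s a s'|) * (H : ℝ) ≤ δp h k * (H : ℝ) :=
          mul_le_mul_of_nonneg_right hPsum (Nat.cast_nonneg _)
        linarith
      rw [hins, Finset.sum_insert hnotmem, Finset.sum_insert hnotmem]
      refine le_trans (abs_add_le _ _) ?_
      have := le_trans (abs_add_le _ _) (add_le_add hrd hsum2)
      calc |r k h s a - r (k + 1) h s a| +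
            |∑ s', (P k h s a s' * V k s' - P (k + 1) h s a s' * V (k + 1) s')|
          ≤ δr h k + ((H : ℝ) * δp h k + D) := add_le_add hrd hsum2
        _ = (δr h k + ∑ h' ∈ Finset.Icc (h + 1) H, δr h' k) +
            (H : ℝ) * (δp h k + ∑ h' ∈ Finset.Icc (h + 1) H, δp h' k) := by
          rw [hD]; ring
  -- Telescoping and summation over episodes
  intro s a h k₁ k₂ hh1 hhH hk1 hk12 hk2K
  have htel : |Q k₁ h s a - Q k₂ h s a| ≤
      ∑ k ∈ Finset.Ico k₁ k₂, |Q k h s a - Q (k + 1) h s a| :=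
    abs_telescope (fun k => Q k h s a) k₁ k₂ (le_of_lt hk12)
  have hstep : ∀ k, |Q k h s a - Q (k + 1) h s a| ≤
      (∑ h' ∈ Finset.Icc h H, δr h' k) + (H : ℝ) * ∑ h' ∈ Finset.Icc h H, δp h' k :=
    fun k => key (H - h) k h (by omega) hh1 s a
  have hsub : Finset.Ico k₁ k₂ ⊆ Finset.Ico 1 K := by
    intro x hx; simp at hx ⊢; omega
  calc |Q k₁ h s a - Q k₂ h s a|
      ≤ ∑ k ∈ Finset.Ico k₁ k₂,
          ((∑ h' ∈ Finset.Icc h H, δr h' k) + (H : ℝ) * ∑ h' ∈ Finset.Icc h H, δp h' k) :=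
        le_trans htel (Finset.sum_le_sum fun k _ => hstep k)
    _ ≤ ∑ k ∈ Finset.Ico 1 K,
          ((∑ h' ∈ Finset.Icc h H, δr h' k) + (H : ℝ) * ∑ h' ∈ Finset.Icc h H, δp h' k) := by
        refine Finset.sum_le_sum_of_subset_of_nonneg hsub fun k _ _ => ?_
        exact add_nonneg (Finset.sum_nonneg fun h' _ => hδr0 h' k)
          (mul_nonneg (Nat.cast_nonneg _) (Finset.sum_nonneg fun h' _ => hδp0 h' k))
    _ = (∑ h' ∈ Finset.Icc h H, Δr h') + (H : ℝ) * ∑ h' ∈ Finset.Icc h H, Δp h' := by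
        rw [Finset.sum_add_distrib, ← Finset.mul_sum]
        rw [Finset.sum_comm (s := Finset.Ico 1 K) (t := Finset.Icc h H)
          (f := fun k h' => δr h' k)]
        rw [Finset.sum_comm (s := Finset.Ico 1 K) (t := Finset.Icc h H)
          (f := fun k h' => δp h' k)]
        congr 1
        · exact Finset.sum_congr rfl fun h' _ => (hΔr h').symm
        · congr 1
          exact Finset.sum_congr rfl fun h' _ => (hΔp h').symm
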